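/- The space (Z,d) is an ultrametric space, it is homeomorphic to the Baire space ω^ω = ℕ^ℕ, and it is not a discrete ultrametric space. -/

import Mathlib

open Filter Topology Set Classical

noncomputable section
open scoped Classical

/-- A set is Fσ if it is a countable union of closed sets. -/
def IsFsigma {X : Type*} [TopologicalSpace X] (s : Set X) : Prop :=
  ∃ F : ℕ → Set X, (∀ n, IsClosed (F n)) ∧ s = ⋃ n, F n

/-- A function is Baire class one if the preimage of every open set is Fσ. -/
def BaireClassOneFn {X Y : Type*} [TopologicalSpace X] [TopologicalSpace Y] (f : X → Y) : Prop :=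
  ∀ U : Set Y, IsOpen U → IsFsigma (f ⁻¹' U)

/-- A countable basis `(W m)` is good if for every open `U` and `x ∈ U` there is `m₀`
such that for all `m ≥ m₀`, `x ∈ W m` implies `W m ⊆ U`. -/
def IsGoodBasis {X : Type*} [TopologicalSpace X] (W : ℕ → Set X) : Prop :=
  TopologicalSpace.IsTopologicalBasis (Set.range W) ∧
  ∀ U : Set X, IsOpen U → ∀ x ∈ U, ∃ m₀, ∀ m ≥ m₀, x ∈ W m → W m ⊆ U

/-- The path to `x` based on the dense sequence `D`, relative to the good basis `W`. -/
noncomputable def pathSeq {X : Type*} (W : ℕ → Set X) (D : ℕ → X) (x : X) : ℕ → X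
  | 0 => D 0
  | n + 1 =>
    if x = pathSeq W D x n then pathSeq W D x n
    else D (sInf {p | ∃ m, x ∈ W m ∧ D p ∈ W m ∧ ∀ k, k ≤ n → pathSeq W D x k ∉ W m})
  termination_by n => n
  decreasing_by all_goals omega

/-- `f` is recoverable with respect to `D` (and the good basis `W`). -/
def RecoverableWith {X Y : Type*} [TopologicalSpace Y] (W : ℕ → Set X) (D : ℕ → X)
    (f : X → Y) : Prop :=
  ∀ x : X, Tendsto (fun n => f (pathSeq W D x n)) atTop (𝓝 (f x))

/-- The (first return) route to `x` based on the dense sequence `D`, relative to a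
distance function `d`. -/
noncomputable def routeSeq {X : Type*} (d : X → X → ℝ) (D : ℕ → X) (x : X) : ℕ → X
  | 0 => D 0
  | n + 1 =>
    if x = routeSeq d D x n then routeSeq d D x n
    else D (sInf {p | d x (D p) < d x (routeSeq d D x n)})

/-- The space `Z` of strictly increasing sequences of nonnegative rationals tending to `+∞`. -/
def Zsp : Type :=
  {q : ℕ → ℚ // (∀ n, 0 ≤ q n) ∧ StrictMono q ∧ Tendsto q atTop atTop}

/-- The distance on `Z` : `d(Q,Q') = 2 ^ (- min (q_n, q'_n))` where `n` is the least index
where `Q` and `Q'` differ, and `0` if `Q = Q'`. -/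
noncomputable def dZ (Q Q' : Zsp) : ℝ :=
  if Q = Q' then 0
  else (2 : ℝ) ^
    (-((min (Q.1 (sInf {n | Q.1 n ≠ Q'.1 n})) (Q'.1 (sInf {n | Q.1 n ≠ Q'.1 n})) : ℚ) : ℝ))

namespace ZAux


lemma Zsp.ext' {Q Q' : Zsp} (h : ∀ n, Q.1 n = Q'.1 n) : Q = Q' := Subtype.ext (funext h)

lemma diffSet_nonempty {Q Q' : Zsp} (h : Q ≠ Q') : {n | Q.1 n ≠ Q'.1 n}.Nonempty := by
  by_contra hc
  simp only [Set.Nonempty, Set.mem_setOf_eq, not_exists, not_not] at hc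
  exact h (Zsp.ext' hc)

lemma dZ_self (Q : Zsp) : dZ Q Q = 0 := if_pos rfl

lemma dZ_nonneg (Q Q' : Zsp) : 0 ≤ dZ Q Q' := by
  unfold dZ; split
  · exact le_refl 0
  · positivity

lemma dZ_pos {Q Q' : Zsp} (h : Q ≠ Q') : 0 < dZ Q Q' := by
  unfold dZ; rw [if_neg h]; positivity

lemma dZ_comm (Q Q' : Zsp) : dZ Q Q' = dZ Q' Q := by
  unfold dZ
  by_cases h : Q = Q'
  · rw [if_pos h, if_pos h.symm]
  · rw [if_neg h, if_neg (Ne.symm h)]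
    have hs : {n | Q.1 n ≠ Q'.1 n} = {n | Q'.1 n ≠ Q.1 n} := by ext n; exact ne_comm
    rw [hs, min_comm]

lemma dZ_eq_zero {Q Q' : Zsp} (h : dZ Q Q' = 0) : Q = Q' := by
  by_contra hne
  exact absurd h (ne_of_gt (dZ_pos hne))

/-- the exponent monotone helper -/
lemma two_rpow_le {x y : ℝ} (h : x ≤ y) : (2:ℝ) ^ x ≤ (2:ℝ) ^ y :=
  Real.rpow_le_rpow_of_exponent_le one_le_two h

lemma dZ_ultra (Q Q' Q'' : Zsp) : dZ Q Q'' ≤ max (dZ Q Q') (dZ Q' Q'') := by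
  by_cases hQ : Q = Q''
  · rw [hQ, dZ_self]; exact le_max_of_le_left (dZ_nonneg _ _)
  by_cases h1 : Q = Q'
  · rw [h1]; exact le_max_right _ _
  by_cases h2 : Q' = Q''
  · rw [← h2]; exact le_max_left _ _
  -- all distinct
  set n1 := sInf {n | Q.1 n ≠ Q'.1 n} with hn1
  set n2 := sInf {n | Q'.1 n ≠ Q''.1 n} with hn2
  set n := sInf {n | Q.1 n ≠ Q''.1 n} with hn
  set b1 : ℚ := min (Q.1 n1) (Q'.1 n1) with hb1
  set b2 : ℚ := min (Q'.1 n2) (Q''.1 n2) with hb2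
  set a : ℚ := min (Q.1 n) (Q''.1 n) with ha
  have key : min b1 b2 ≤ a := by
    rcases lt_trichotomy n1 n2 with hlt | heq | hgt
    · -- n = n1, a = b1
      have e1 : Q'.1 n1 = Q''.1 n1 := by
        have := Nat.notMem_of_lt_sInf hlt
        simpa using this
      have mem : n1 ∈ {k | Q.1 k ≠ Q''.1 k} := by
        have h0 : Q.1 n1 ≠ Q'.1 n1 := Nat.sInf_mem (diffSet_nonempty h1)
        simpa [Set.mem_setOf_eq, ← e1] using h0
      have hne : n = n1 := by
        refine le_antisymm (Nat.sInf_le mem) ?_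
        refine le_csInf (diffSet_nonempty hQ) fun m hm => ?_
        by_contra hmlt
        push_neg at hmlt
        have e2 : Q.1 m = Q'.1 m := by
          have := Nat.notMem_of_lt_sInf (lt_of_lt_of_le hmlt (le_refl n1))
          simpa using this
        have e3 : Q'.1 m = Q''.1 m := by
          have := Nat.notMem_of_lt_sInf (lt_trans hmlt hlt)
          simpa using this
        exact hm (e2.trans e3)
      rw [ha, hne, ← e1, ← hb1]
      exact min_le_left _ _
    · -- n1 = n2 : n ≥ n1 and a ≥ min over three
      have hge : n1 ≤ n := by
        refine le_csInf (diffSet_nonempty hQ) fun m hm => ?_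
        by_contra hmlt
        push_neg at hmlt
        have e2 : Q.1 m = Q'.1 m := by
          have := Nat.notMem_of_lt_sInf hmlt
          simpa using this
        have e3 : Q'.1 m = Q''.1 m := by
          have := Nat.notMem_of_lt_sInf (heq ▸ hmlt)
          simpa using this
        exact hm (e2.trans e3)
      have mono : min (Q.1 n1) (Q''.1 n1) ≤ a := by
        exact le_min ((min_le_left _ _).trans ((Q.2.2.1.monotone hge)))
          ((min_le_right _ _).trans ((Q''.2.2.1.monotone hge)))
      refine le_trans ?_ mono
      rw [hb1, hb2, ← heq]
      exact le_min ((min_le_left _ _).trans (min_le_left _ _))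
        ((min_le_right _ _).trans (min_le_right _ _))
    · -- n2 < n1 : n = n2, a = b2
      have e1 : Q.1 n2 = Q'.1 n2 := by
        have := Nat.notMem_of_lt_sInf hgt
        simpa using this
      have mem : n2 ∈ {k | Q.1 k ≠ Q''.1 k} := by
        have h0 : Q'.1 n2 ≠ Q''.1 n2 := Nat.sInf_mem (diffSet_nonempty h2)
        simpa [Set.mem_setOf_eq, e1] using h0
      have hne : n = n2 := by
        refine le_antisymm (Nat.sInf_le mem) ?_
        refine le_csInf (diffSet_nonempty hQ) fun m hm => ?_
        by_contra hmlt
        push_neg at hmlt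
        have e3 : Q'.1 m = Q''.1 m := by
          have := Nat.notMem_of_lt_sInf hmlt
          simpa using this
        have e2 : Q.1 m = Q'.1 m := by
          have := Nat.notMem_of_lt_sInf (lt_trans hmlt hgt)
          simpa using this
        exact hm (e2.trans e3)
      rw [ha, hne, e1, ← hb2]
      exact min_le_right _ _
  have expand : dZ Q Q'' = (2:ℝ) ^ (-(a : ℝ)) := by rw [dZ, if_neg hQ]
  have e1 : dZ Q Q' = (2:ℝ) ^ (-(b1 : ℝ)) := by rw [dZ, if_neg h1]
  have e2 : dZ Q' Q'' = (2:ℝ) ^ (-(b2 : ℝ)) := by rw [dZ, if_neg h2]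
  rw [expand, e1, e2]
  have : (2:ℝ) ^ (-(a:ℝ)) ≤ (2:ℝ) ^ (-((min b1 b2 : ℚ) : ℝ)) := by
    apply two_rpow_le
    simp only [neg_le_neg_iff, Rat.cast_le]
    exact key
  refine this.trans ?_
  have hmax : (-((min b1 b2 : ℚ) : ℝ)) = max (-(b1:ℝ)) (-(b2:ℝ)) := by
    push_cast; rw [max_neg_neg]
  rw [hmax]
  have mono : Monotone (fun x : ℝ => (2:ℝ) ^ x) := fun x y h => two_rpow_le h
  rw [mono.map_max]

noncomputable instance instMSZ : MetricSpace Zsp where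
  dist := dZ
  dist_self := dZ_self
  dist_comm := dZ_comm
  dist_triangle := by
    intro x y z
    refine (dZ_ultra x y z).trans ?_
    exact max_le (le_add_of_nonneg_right (dZ_nonneg _ _)) (le_add_of_nonneg_left (dZ_nonneg _ _))
  eq_of_dist_eq_zero := dZ_eq_zero



/-- a block with lower bound `b` -/
def IsBlk (b : WithBot ℚ) (l : List ℚ) : Prop :=
  l ≠ [] ∧ l.Chain' (· < ·) ∧ (b < (l.headI : WithBot ℚ) ∧ 0 ≤ l.headI) ∧
    ∀ x ∈ l, x ≤ l.headI + 1

def Blk (b : WithBot ℚ) : Type := {l : List ℚ // IsBlk b l}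

instance (b : WithBot ℚ) : Countable (Blk b) := by
  unfold Blk; infer_instance

instance (b : WithBot ℚ) : Infinite (Blk b) := by
  refine Infinite.of_injective (fun n : ℕ => (⟨[max (b.unbotD 0) 0 + n + 1], ?_⟩ : Blk b)) ?_
  · refine ⟨by simp, List.isChain_singleton _, ⟨?_, by simp; positivity⟩, ?_⟩
    · cases b with
      | bot => exact WithBot.bot_lt_coe _
      | coe r =>
        rw [WithBot.coe_lt_coe]
        simp only [WithBot.unbotD_coe, List.headI_cons]
        have : r ≤ max r 0 := le_max_left _ _
    -- cast
        linarith
    · intro x hx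
      simp only [List.mem_singleton] at hx
      subst hx
      simp only [List.headI_cons]
      linarith
  · intro m n h
    have h1 := congrArg (fun x : Blk b => x.1.headI) h
    simp only [List.headI_cons] at h1
    have : (m : ℚ) = n := by linarith
    exact_mod_cast this

/-- enumeration of blocks -/
noncomputable def eB (b : WithBot ℚ) : Blk b ≃ ℕ :=
  Classical.choice nonempty_equiv_of_countable

lemma eB_congr {b b' : WithBot ℚ} (h : b = b') (x : Blk b) (y : Blk b') (hxy : x.1 = y.1) :
    eB b x = eB b' y := by
  subst h
  exact congrArg _ (Subtype.ext hxy)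

lemma eB_symm_congr {b b' : WithBot ℚ} (h : b = b') (m : ℕ) :
    ((eB b).symm m).1 = ((eB b').symm m).1 := by subst h; rfl

/-- start indices of blocks of `Q` -/
def nIdx (Q : Zsp) : ℕ → ℕ
  | 0 => 0
  | k + 1 => sInf {n | Q.1 (nIdx Q k) + 1 < Q.1 n}

lemma exists_gt (Q : Zsp) (c : ℚ) : {n | c < Q.1 n}.Nonempty :=
  (Q.2.2.2.eventually_gt_atTop c).exists

lemma nIdx_mem (Q : Zsp) (k : ℕ) : Q.1 (nIdx Q k) + 1 < Q.1 (nIdx Q (k + 1)) :=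
  Nat.sInf_mem (exists_gt Q _)

lemma nIdx_lt (Q : Zsp) (k : ℕ) : nIdx Q k < nIdx Q (k + 1) := by
  have h := nIdx_mem Q k
  by_contra hc
  push_neg at hc
  have := Q.2.2.1.monotone hc
  linarith

lemma nIdx_mono (Q : Zsp) : Monotone (nIdx Q) :=
  monotone_nat_of_le_succ fun k => (nIdx_lt Q k).le

lemma nIdx_min (Q : Zsp) (k : ℕ) {n : ℕ} (h : n < nIdx Q (k + 1)) :
    Q.1 n ≤ Q.1 (nIdx Q k) + 1 := by
  have := Nat.notMem_of_lt_sInf (show n < sInf {n | Q.1 (nIdx Q k) + 1 < Q.1 n} from h)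
  simpa using this

def blockOf (Q : Zsp) (k : ℕ) : List ℚ :=
  (List.range (nIdx Q (k + 1) - nIdx Q k)).map fun i => Q.1 (nIdx Q k + i)

def bndOf (Q : Zsp) : ℕ → WithBot ℚ
  | 0 => ⊥
  | k + 1 => ↑(Q.1 (nIdx Q k) + 1)

lemma blockOf_length (Q : Zsp) (k : ℕ) :
    (blockOf Q k).length = nIdx Q (k + 1) - nIdx Q k := by
  simp [blockOf]

lemma blockOf_length_pos (Q : Zsp) (k : ℕ) : 0 < (blockOf Q k).length := by
  rw [blockOf_length]
  exact Nat.sub_pos_of_lt (nIdx_lt Q k)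

lemma blockOf_get (Q : Zsp) (k : ℕ) (i : ℕ) (h : i < (blockOf Q k).length) :
    (blockOf Q k)[i]'h = Q.1 (nIdx Q k + i) := by
  simp [blockOf]

lemma headI_eq_getElem {l : List ℚ} (h : l ≠ []) :
    l.headI = l[0]'(List.length_pos_iff.mpr h) := by
  cases l with
  | nil => exact absurd rfl h
  | cons a t => rfl

lemma blockOf_ne_nil (Q : Zsp) (k : ℕ) : blockOf Q k ≠ [] :=
  List.ne_nil_of_length_pos (blockOf_length_pos Q k)

lemma blockOf_headI (Q : Zsp) (k : ℕ) : (blockOf Q k).headI = Q.1 (nIdx Q k) := by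
  rw [headI_eq_getElem (blockOf_ne_nil Q k), blockOf_get]
  simp

lemma blockOf_isBlk (Q : Zsp) (k : ℕ) : IsBlk (bndOf Q k) (blockOf Q k) := by
  refine ⟨blockOf_ne_nil Q k, ?_, ⟨?_, ?_⟩, ?_⟩
  · rw [List.Chain', List.isChain_iff_getElem]
    intro i h
    rw [blockOf_get, blockOf_get]
    exact Q.2.2.1 (by omega)
  · rw [blockOf_headI]
    cases k with
    | zero => exact WithBot.bot_lt_coe _
    | succ j =>
      show (↑(Q.1 (nIdx Q j) + 1) : WithBot ℚ) < _
      rw [WithBot.coe_lt_coe]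
      exact nIdx_mem Q j
  · rw [blockOf_headI]; exact Q.2.1 _
  · intro x hx
    rw [blockOf_headI]
    simp only [blockOf, List.mem_map, List.mem_range] at hx
    obtain ⟨i, hi, rfl⟩ := hx
    exact nIdx_min Q k (by omega)

/-! ### concatenation of valid block sequences -/

def Valid (β : ℕ → List ℚ) : Prop :=
  IsBlk ⊥ (β 0) ∧ ∀ k, IsBlk ↑((β k).headI + 1) (β (k + 1))

def cum (β : ℕ → List ℚ) (k : ℕ) : ℕ := (Finset.range k).sum fun i => (β i).length

def kOf (β : ℕ → List ℚ) (n : ℕ) : ℕ := sInf {k | n < cum β (k + 1)}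

def catSeq (β : ℕ → List ℚ) (n : ℕ) : ℚ := (β (kOf β n)).getD (n - cum β (kOf β n)) 0

section valid

variable {β : ℕ → List ℚ} (hv : Valid β)

lemma valid_isBlk (hv : Valid β) (k : ℕ) :
    ∃ b : WithBot ℚ, IsBlk b (β k) := by
  cases k with
  | zero => exact ⟨⊥, hv.1⟩
  | succ j => exact ⟨_, hv.2 j⟩

lemma valid_ne_nil (hv : Valid β) (k : ℕ) : β k ≠ [] := (valid_isBlk hv k).choose_spec.1

lemma valid_len_pos (hv : Valid β) (k : ℕ) : 0 < (β k).length :=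
  List.length_pos_iff.mpr (valid_ne_nil hv k)

lemma cum_succ (β : ℕ → List ℚ) (k : ℕ) : cum β (k + 1) = cum β k + (β k).length :=
  Finset.sum_range_succ _ _

lemma cum_zero (β : ℕ → List ℚ) : cum β 0 = 0 := rfl

lemma cum_lt_succ (hv : Valid β) (k : ℕ) : cum β k < cum β (k + 1) := by
  rw [cum_succ]; have := valid_len_pos hv k; omega

lemma cum_strictMono (hv : Valid β) : StrictMono (cum β) :=
  strictMono_nat_of_lt_succ (cum_lt_succ hv)

lemma cum_ge (hv : Valid β) (k : ℕ) : k ≤ cum β k := by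
  induction k with
  | zero => exact Nat.zero_le _
  | succ j ih => have := cum_lt_succ hv j; omega

lemma kOf_nonempty (hv : Valid β) (n : ℕ) : {k | n < cum β (k + 1)}.Nonempty :=
  ⟨n, by have := cum_ge hv (n + 1); simpa using by omega⟩

lemma kOf_spec (hv : Valid β) (n : ℕ) :
    cum β (kOf β n) ≤ n ∧ n < cum β (kOf β n + 1) := by
  constructor
  · cases h : kOf β n with
    | zero => rw [cum_zero]; exact Nat.zero_le _
    | succ j =>
      have hj : j < kOf β n := by omega
      have := Nat.notMem_of_lt_sInf (show j < sInf {k | n < cum β (k + 1)} from hj)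
      simp only [Set.mem_setOf_eq, not_lt] at this
      omega
  · exact Nat.sInf_mem (kOf_nonempty hv n)

lemma kOf_eq (hv : Valid β) {n k : ℕ} (h1 : cum β k ≤ n) (h2 : n < cum β (k + 1)) :
    kOf β n = k := by
  have hs := kOf_spec hv n
  by_contra hc
  rcases lt_or_gt_of_ne hc with hlt | hgt
  · have : cum β (kOf β n + 1) ≤ cum β k := (cum_strictMono hv).monotone (by omega)
    omega
  · have : cum β (k + 1) ≤ cum β (kOf β n) := (cum_strictMono hv).monotone (by omega)
    omega

lemma kOf_le_self (hv : Valid β) (n : ℕ) : kOf β n ≤ n :=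
  Nat.sInf_le (by have := cum_ge hv (n + 1); simpa using by omega)

lemma catSeq_eq (hv : Valid β) (k i : ℕ) (h : i < (β k).length) :
    catSeq β (cum β k + i) = (β k)[i]'h := by
  have hk : kOf β (cum β k + i) = k :=
    kOf_eq hv (by omega) (by rw [cum_succ]; omega)
  rw [catSeq, hk, Nat.add_sub_cancel_left, List.getD_eq_getElem]

lemma headI_getElem {l : List ℚ} (h : l ≠ []) : l.headI = l[0]'(List.length_pos_iff.mpr h) :=
  headI_eq_getElem h

lemma catSeq_cum (hv : Valid β) (k : ℕ) : catSeq β (cum β k) = (β k).headI := by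
  have := catSeq_eq hv k 0 (valid_len_pos hv k)
  rw [Nat.add_zero] at this
  rw [this, headI_eq_getElem (valid_ne_nil hv k)]

lemma valid_head_lt (hv : Valid β) (k : ℕ) : (β k).headI + 1 < (β (k + 1)).headI := by
  have := (hv.2 k).2.2.1.1
  exact_mod_cast this

lemma valid_head_mono (hv : Valid β) : Monotone fun k => (β k).headI :=
  monotone_nat_of_le_succ fun k => by have := valid_head_lt hv k; linarith

lemma valid_mem_le (hv : Valid β) (k : ℕ) {x : ℚ} (hx : x ∈ β k) : x ≤ (β k).headI + 1 := by
  rcases valid_isBlk hv k with ⟨b, hb⟩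
  exact hb.2.2.2 x hx

lemma catSeq_strictMono (hv : Valid β) : StrictMono (catSeq β) := by
  apply strictMono_nat_of_lt_succ
  intro n
  obtain ⟨h1, h2⟩ := kOf_spec hv n
  set k := kOf β n with hk
  have hi : n - cum β k < (β k).length := by rw [cum_succ] at h2; omega
  have e1 : catSeq β n = (β k)[n - cum β k]'hi := by
    have := catSeq_eq hv k (n - cum β k) hi
    rwa [Nat.add_sub_cancel' h1] at this
  by_cases hc : n + 1 < cum β (k + 1)
  · -- same block
    have hi2 : n + 1 - cum β k < (β k).length := by rw [cum_succ] at hc; omega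
    have e2 : catSeq β (n + 1) = (β k)[n + 1 - cum β k]'hi2 := by
      have := catSeq_eq hv k (n + 1 - cum β k) hi2
      rwa [Nat.add_sub_cancel' (by omega)] at this
    rw [e1, e2]
    have heq : n + 1 - cum β k = (n - cum β k) + 1 := by omega
    simp only [heq]
    have hchain := (valid_isBlk hv k).choose_spec.2.1
    rw [List.Chain', List.isChain_iff_getElem] at hchain
    have h3 := hchain (n - cum β k) (by omega)
    simpa using h3
  · -- junction: n + 1 = cum β (k + 1)
    have hn1 : n + 1 = cum β (k + 1) := by omega
    have e2 : catSeq β (n + 1) = (β (k + 1)).headI := by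
      rw [hn1]; exact catSeq_cum hv (k + 1)
    rw [e1, e2]
    have hmem : (β k)[n - cum β k]'hi ∈ β k := List.getElem_mem _
    have := valid_mem_le hv k hmem
    have := valid_head_lt hv k
    linarith

lemma catSeq_zero (hv : Valid β) : catSeq β 0 = (β 0).headI := by
  have := catSeq_cum hv 0
  rwa [cum_zero] at this

lemma catSeq_nonneg (hv : Valid β) (n : ℕ) : 0 ≤ catSeq β n := by
  have h0 : 0 ≤ catSeq β 0 := by rw [catSeq_zero hv]; exact hv.1.2.2.1.2
  exact h0.trans ((catSeq_strictMono hv).monotone (Nat.zero_le n))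

lemma valid_head_ge (hv : Valid β) (k : ℕ) : (k : ℚ) ≤ (β k).headI := by
  induction k with
  | zero => exact_mod_cast hv.1.2.2.1.2
  | succ j ih =>
    have := valid_head_lt hv j
    push_cast
    linarith

lemma catSeq_tendsto (hv : Valid β) : Tendsto (catSeq β) atTop atTop := by
  apply tendsto_atTop_atTop_of_monotone (catSeq_strictMono hv).monotone
  intro b
  obtain ⟨k, hk⟩ := exists_nat_ge b
  refine ⟨cum β k, ?_⟩
  rw [catSeq_cum hv k]
  exact hk.trans (valid_head_ge hv k)

def catZ (β : ℕ → List ℚ) (hv : Valid β) : Zsp :=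
  ⟨catSeq β, catSeq_nonneg hv, catSeq_strictMono hv, catSeq_tendsto hv⟩

end valid

/-! ### recovery -/

section recover

variable {β : ℕ → List ℚ} (hv : Valid β)

lemma catZ_val (hv : Valid β) : (catZ β hv).1 = catSeq β := rfl

lemma catSeq_le (hv : Valid β) {n k : ℕ} (h : n < cum β (k + 1)) :
    catSeq β n ≤ (β k).headI + 1 := by
  obtain ⟨h1, h2⟩ := kOf_spec hv n
  set j := kOf β n with hj
  have hjk : j ≤ k := Nat.sInf_le h
  have hi : n - cum β j < (β j).length := by rw [cum_succ] at h2; omega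
  have e1 : catSeq β n = (β j)[n - cum β j]'hi := by
    have := catSeq_eq hv j (n - cum β j) hi
    rwa [Nat.add_sub_cancel' h1] at this
  rw [e1]
  have hmem : (β j)[n - cum β j]'hi ∈ β j := List.getElem_mem _
  have := valid_mem_le hv j hmem
  have := valid_head_mono hv hjk
  simp only at this
  linarith [valid_mem_le hv j hmem]

lemma nIdx_catZ (hv : Valid β) (k : ℕ) : nIdx (catZ β hv) k = cum β k := by
  induction k with
  | zero => rfl
  | succ j ih =>
    have hval : (catZ β hv).1 (nIdx (catZ β hv) j) = (β j).headI := by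
      rw [catZ_val, ih]
      exact catSeq_cum hv j
    show sInf {n | (catZ β hv).1 (nIdx (catZ β hv) j) + 1 < (catZ β hv).1 n} = cum β (j + 1)
    rw [hval]
    refine le_antisymm (Nat.sInf_le ?_) (le_csInf ⟨cum β (j+1), ?_⟩ fun m hm => ?_)
    · show (β j).headI + 1 < catSeq β (cum β (j + 1))
      rw [catSeq_cum hv (j + 1)]
      exact valid_head_lt hv j
    · show (β j).headI + 1 < catSeq β (cum β (j + 1))
      rw [catSeq_cum hv (j + 1)]
      exact valid_head_lt hv j
    · by_contra hc
      push_neg at hc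
      have := catSeq_le hv hc
      have hm' : (β j).headI + 1 < catSeq β m := hm
      linarith

lemma blockOf_catZ (hv : Valid β) (k : ℕ) : blockOf (catZ β hv) k = β k := by
  have hlen : (blockOf (catZ β hv) k).length = (β k).length := by
    rw [blockOf_length, nIdx_catZ hv, nIdx_catZ hv, cum_succ]
    omega
  refine List.ext_getElem hlen fun i h1 h2 => ?_
  rw [blockOf_get, catZ_val, nIdx_catZ hv]
  exact catSeq_eq hv k i h2

lemma bndOf_catZ (hv : Valid β) (k : ℕ) :
    bndOf (catZ β hv) (k + 1) = ↑((β k).headI + 1) := by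
  show (↑((catZ β hv).1 (nIdx (catZ β hv) k) + 1) : WithBot ℚ) = _
  rw [catZ_val, nIdx_catZ hv, catSeq_cum hv]

lemma bndOf_succ (Q : Zsp) (k : ℕ) : bndOf Q (k + 1) = ↑((blockOf Q k).headI + 1) := by
  rw [blockOf_headI]; rfl

lemma blockOf_valid (Q : Zsp) : Valid (blockOf Q) :=
  ⟨blockOf_isBlk Q 0, fun k => by
    have := blockOf_isBlk Q (k + 1)
    rwa [bndOf_succ Q k] at this⟩

lemma cum_blockOf (Q : Zsp) (k : ℕ) : cum (blockOf Q) k = nIdx Q k := by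
  induction k with
  | zero => rfl
  | succ j ih =>
    rw [cum_succ, ih, blockOf_length]
    have := nIdx_lt Q j
    omega

lemma catSeq_blockOf (Q : Zsp) : catSeq (blockOf Q) = Q.1 := by
  funext n
  have hv := blockOf_valid Q
  obtain ⟨h1, h2⟩ := kOf_spec hv n
  set k := kOf (blockOf Q) n with hk
  have hi : n - cum (blockOf Q) k < (blockOf Q k).length := by rw [cum_succ] at h2; omega
  have e1 : catSeq (blockOf Q) n = (blockOf Q k)[n - cum (blockOf Q) k]'hi := by
    have := catSeq_eq hv k (n - cum (blockOf Q) k) hi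
    rwa [Nat.add_sub_cancel' h1] at this
  rw [e1, blockOf_get]
  have h1' : nIdx Q k ≤ n := by rwa [cum_blockOf] at h1
  have harg : nIdx Q k + (n - cum (blockOf Q) k) = n := by rw [cum_blockOf]; omega
  rw [harg]

lemma catZ_blockOf (Q : Zsp) : catZ (blockOf Q) (blockOf_valid Q) = Q :=
  Subtype.ext (catSeq_blockOf Q)

end recover

/-! ### the bijection -/

def fZ (Q : Zsp) (k : ℕ) : ℕ := eB (bndOf Q k) ⟨blockOf Q k, blockOf_isBlk Q k⟩

def gB (a : ℕ → ℕ) : ℕ → Σ b : WithBot ℚ, Blk b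
  | 0 => ⟨⊥, (eB ⊥).symm (a 0)⟩
  | k + 1 => ⟨↑((((gB a k).2 : Blk _)).1.headI + 1), (eB _).symm (a (k + 1))⟩

def gSeq (a : ℕ → ℕ) (k : ℕ) : List ℚ := ((gB a k).2).1

lemma gB_bnd_succ (a : ℕ → ℕ) (k : ℕ) : (gB a (k + 1)).1 = ↑((gSeq a k).headI + 1) := rfl

lemma gSeq_valid (a : ℕ → ℕ) : Valid (gSeq a) :=
  ⟨(gB a 0).2.2, fun k => (gB a (k + 1)).2.2⟩

def gZ (a : ℕ → ℕ) : Zsp := catZ (gSeq a) (gSeq_valid a)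

lemma gB_fZ (Q : Zsp) (k : ℕ) :
    (gB (fZ Q) k).1 = bndOf Q k ∧ gSeq (fZ Q) k = blockOf Q k := by
  induction k with
  | zero =>
    refine ⟨rfl, ?_⟩
    show ((eB ⊥).symm (fZ Q 0)).1 = blockOf Q 0
    have h0 : fZ Q 0 = eB ⊥ ⟨blockOf Q 0, blockOf_isBlk Q 0⟩ := rfl
    rw [h0]; exact congrArg Subtype.val ((eB ⊥).symm_apply_apply _)
  | succ j ih =>
    have hb : (gB (fZ Q) (j + 1)).1 = bndOf Q (j + 1) := by
      rw [gB_bnd_succ, ih.2, ← bndOf_succ]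
    refine ⟨hb, ?_⟩
    show ((eB ((gB (fZ Q) (j + 1)).1)).symm (fZ Q (j + 1))).1 = blockOf Q (j + 1)
    rw [eB_symm_congr hb (fZ Q (j + 1))]
    have h0 : fZ Q (j + 1) = eB (bndOf Q (j + 1)) ⟨blockOf Q (j + 1), blockOf_isBlk Q (j + 1)⟩ :=
      rfl
    rw [h0]; exact congrArg Subtype.val ((eB (bndOf Q (j + 1))).symm_apply_apply _)

lemma gZ_fZ (Q : Zsp) : gZ (fZ Q) = Q := by
  apply Subtype.ext
  show catSeq (gSeq (fZ Q)) = Q.1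
  have h : gSeq (fZ Q) = blockOf Q := funext fun k => (gB_fZ Q k).2
  rw [h, catSeq_blockOf]

lemma bnd_gZ (a : ℕ → ℕ) (k : ℕ) : bndOf (gZ a) k = (gB a k).1 := by
  cases k with
  | zero => rfl
  | succ j =>
    rw [bndOf_succ, gB_bnd_succ]
    congr 2
    exact congrArg List.headI (blockOf_catZ (gSeq_valid a) j)

lemma fZ_gZ (a : ℕ → ℕ) : fZ (gZ a) = a := by
  funext k
  show eB (bndOf (gZ a) k) ⟨blockOf (gZ a) k, blockOf_isBlk _ k⟩ = a k
  have h1 : eB (bndOf (gZ a) k) ⟨blockOf (gZ a) k, blockOf_isBlk _ k⟩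
      = eB ((gB a k).1) ((gB a k).2) :=
    eB_congr (bnd_gZ a k) _ _ (blockOf_catZ (gSeq_valid a) k)
  rw [h1]
  have h2 : (gB a k).2 = (eB ((gB a k).1)).symm (a k) := by cases k <;> rfl
  rw [h2, Equiv.apply_symm_apply]


/-! ### ball-cylinder lemmas -/

lemma agree_of_dZ_lt {Q Q' : Zsp} {N : ℕ} (h : dZ Q Q' < (2:ℝ) ^ (-(Q.1 N : ℝ))) :
    ∀ j ≤ N, Q.1 j = Q'.1 j := by
  by_cases hq : Q = Q'
  · subst hq; exact fun j _ => rfl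
  intro j hj
  set n₀ := sInf {n | Q.1 n ≠ Q'.1 n} with hn₀
  have hd : dZ Q Q' = (2:ℝ) ^ (-((min (Q.1 n₀) (Q'.1 n₀) : ℚ) : ℝ)) := by
    rw [dZ, if_neg hq]
  rw [hd] at h
  have hexp : -((min (Q.1 n₀) (Q'.1 n₀) : ℚ) : ℝ) < -(Q.1 N : ℝ) :=
    (Real.rpow_lt_rpow_left_iff one_lt_two).mp h
  have hmin : (Q.1 N : ℚ) < min (Q.1 n₀) (Q'.1 n₀) := by
    have := neg_lt_neg_iff.mp hexp
    exact_mod_cast this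
  have hN : N < n₀ := by
    have h1 : Q.1 N < Q.1 n₀ := lt_of_lt_of_le hmin (min_le_left _ _)
    exact Q.2.2.1.lt_iff_lt.mp h1
  have := Nat.notMem_of_lt_sInf (show j < n₀ from lt_of_le_of_lt hj hN)
  simpa using this

lemma dZ_lt_of_agree {Q Q' : Zsp} {N : ℕ} (h : ∀ j ≤ N, Q.1 j = Q'.1 j) :
    dZ Q Q' < (2:ℝ) ^ (-(Q.1 N : ℝ)) := by
  by_cases hq : Q = Q'
  · rw [hq, dZ_self]; positivity
  set n₀ := sInf {n | Q.1 n ≠ Q'.1 n} with hn₀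
  have hm : Q.1 n₀ ≠ Q'.1 n₀ := Nat.sInf_mem (diffSet_nonempty hq)
  have hN : N < n₀ := by
    by_contra hc
    push_neg at hc
    exact hm (h n₀ hc)
  have h1 : Q.1 N < Q.1 n₀ := Q.2.2.1 hN
  have h2 : Q.1 N < Q'.1 n₀ := by
    rw [h N le_rfl]
    exact Q'.2.2.1 hN
  have hmin : (Q.1 N : ℚ) < min (Q.1 n₀) (Q'.1 n₀) := lt_min h1 h2
  rw [dZ, if_neg hq]
  apply Real.rpow_lt_rpow_of_exponent_lt one_lt_two
  rw [neg_lt_neg_iff]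
  exact_mod_cast hmin

/-! ### continuity of fZ -/

lemma nIdx_agree {Q Q' : Zsp} {K : ℕ} (h : ∀ j ≤ nIdx Q K, Q'.1 j = Q.1 j) :
    ∀ k ≤ K, nIdx Q' k = nIdx Q k := by
  intro k
  induction k with
  | zero => intro _; rfl
  | succ j ih =>
    intro hk
    have ihj := ih (by omega)
    show sInf {n | Q'.1 (nIdx Q' j) + 1 < Q'.1 n} = nIdx Q (j + 1)
    rw [ihj]
    have hjK : nIdx Q (j + 1) ≤ nIdx Q K := nIdx_mono Q hk
    have hjK' : nIdx Q j ≤ nIdx Q K := nIdx_mono Q (by omega)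
    have hv1 : Q'.1 (nIdx Q j) = Q.1 (nIdx Q j) := h _ hjK'
    have hmem : nIdx Q (j + 1) ∈ {n | Q'.1 (nIdx Q j) + 1 < Q'.1 n} := by
      show Q'.1 (nIdx Q j) + 1 < Q'.1 (nIdx Q (j + 1))
      rw [hv1, h _ hjK]
      exact nIdx_mem Q j
    refine le_antisymm (Nat.sInf_le hmem) (le_csInf ⟨_, hmem⟩ fun m hm => ?_)
    by_contra hc
    push_neg at hc
    have hmK : m ≤ nIdx Q K := by omega
    have : Q'.1 (nIdx Q j) + 1 < Q'.1 m := hm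
    rw [hv1, h _ hmK] at this
    have := nIdx_min Q j hc
    linarith

lemma blockOf_agree {Q Q' : Zsp} {k : ℕ} (h : ∀ j ≤ nIdx Q (k + 1), Q'.1 j = Q.1 j) :
    blockOf Q' k = blockOf Q k ∧ bndOf Q' k = bndOf Q k := by
  have hn := nIdx_agree h
  constructor
  · rw [blockOf, blockOf, hn k (by omega), hn (k + 1) le_rfl]
    apply List.map_congr_left
    intro i hi
    rw [List.mem_range] at hi
    exact h _ (by omega)
  · cases k with
    | zero => rfl
    | succ j =>
      show (↑(Q'.1 (nIdx Q' j) + 1) : WithBot ℚ) = ↑(Q.1 (nIdx Q j) + 1)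
      rw [hn j (by omega), h _ (le_trans (nIdx_mono Q (by omega)) le_rfl)]

lemma fZ_agree {Q Q' : Zsp} {k : ℕ}
    (h : dZ Q Q' < (2:ℝ) ^ (-(Q.1 (nIdx Q (k + 1)) : ℝ))) : fZ Q' k = fZ Q k := by
  have hag : ∀ j ≤ nIdx Q (k + 1), Q'.1 j = Q.1 j := fun j hj =>
    (agree_of_dZ_lt h j hj).symm
  obtain ⟨hb, hd⟩ := blockOf_agree hag
  exact eB_congr hd _ _ hb

lemma continuous_fZ : Continuous fZ := by
  apply continuous_pi
  intro k
  apply IsLocallyConstant.continuous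
  rw [IsLocallyConstant.iff_exists_open]
  intro Q
  refine ⟨Metric.ball Q ((2:ℝ) ^ (-(Q.1 (nIdx Q (k + 1)) : ℝ))), Metric.isOpen_ball,
    Metric.mem_ball_self (by positivity), fun Q' hQ' => ?_⟩
  apply fZ_agree
  rw [Metric.mem_ball] at hQ'
  calc dZ Q Q' = dZ Q' Q := dZ_comm Q Q'
    _ < _ := hQ'

/-! ### continuity of gZ -/

lemma gB_agree {a a' : ℕ → ℕ} {N : ℕ} (h : ∀ k ≤ N, a' k = a k) :
    ∀ k ≤ N, (gB a' k).1 = (gB a k).1 ∧ gSeq a' k = gSeq a k := by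
  intro k
  induction k with
  | zero =>
    intro _
    refine ⟨rfl, ?_⟩
    show ((eB ⊥).symm (a' 0)).1 = ((eB ⊥).symm (a 0)).1
    rw [h 0 (Nat.zero_le _)]
  | succ j ih =>
    intro hk
    obtain ⟨_, ihs⟩ := ih (by omega)
    have hb : (gB a' (j + 1)).1 = (gB a (j + 1)).1 := by
      rw [gB_bnd_succ, gB_bnd_succ, ihs]
    refine ⟨hb, ?_⟩
    show ((eB ((gB a' (j + 1)).1)).symm (a' (j + 1))).1
        = ((eB ((gB a (j + 1)).1)).symm (a (j + 1))).1
    rw [h (j + 1) hk, eB_symm_congr hb]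

lemma gZ_agree {a a' : ℕ → ℕ} {N : ℕ} (h : ∀ k ≤ N, a' k = a k) :
    ∀ j ≤ N, (gZ a').1 j = (gZ a).1 j := by
  intro j hj
  have hgb := gB_agree h
  have hcum : ∀ k ≤ N + 1, cum (gSeq a') k = cum (gSeq a) k := by
    intro k hk
    apply Finset.sum_congr rfl
    intro i hi
    rw [Finset.mem_range] at hi
    rw [(hgb i (by omega)).2]
  set k := kOf (gSeq a) j with hkdef
  have hkN : k ≤ j := kOf_le_self (gSeq_valid a) j
  obtain ⟨h1, h2⟩ := kOf_spec (gSeq_valid a) j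
  have hk' : kOf (gSeq a') j = k := by
    apply kOf_eq (gSeq_valid a')
    · rw [hcum k (by omega)]; exact h1
    · rw [hcum (k + 1) (by omega)]; exact h2
  show catSeq (gSeq a') j = catSeq (gSeq a) j
  rw [catSeq, catSeq, hk', (hgb k (by omega)).2, hcum k (by omega)]

lemma continuous_gZ : Continuous gZ := by
  rw [continuous_iff_continuousAt]
  intro a
  refine Metric.tendsto_nhds.mpr fun ε hε => ?_
  have h2 : ∀ n : ℕ, (2:ℝ) ^ (-(n : ℝ)) = (1/2 : ℝ) ^ n := by
    intro n
    rw [Real.rpow_neg (by norm_num), Real.rpow_natCast]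
    simp [one_div, inv_pow]
  obtain ⟨n, hn⟩ := exists_pow_lt_of_lt_one hε (by norm_num : (1/2 : ℝ) < 1)
  obtain ⟨N, hN⟩ := ((gZ a).2.2.2.eventually_ge_atTop (n : ℚ)).exists
  have hball : (2:ℝ) ^ (-((gZ a).1 N : ℝ)) < ε := by
    calc (2:ℝ) ^ (-((gZ a).1 N : ℝ)) ≤ (2:ℝ) ^ (-(n : ℝ)) := by
          apply two_rpow_le
          rw [neg_le_neg_iff]
          exact_mod_cast hN
      _ = (1/2 : ℝ) ^ n := h2 n
      _ < ε := hn
  have hV : {a' : ℕ → ℕ | ∀ k ≤ N, a' k = a k} ∈ 𝓝 a := by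
    have heq : {a' : ℕ → ℕ | ∀ k ≤ N, a' k = a k}
        = ⋂ k ∈ Finset.range (N + 1), (fun a' : ℕ → ℕ => a' k) ⁻¹' {a k} := by
      ext x
      simp [Nat.lt_succ_iff]
    refine IsOpen.mem_nhds ?_ (by simp)
    rw [heq]
    exact isOpen_biInter_finset fun k _ =>
      (continuous_apply k).isOpen_preimage _ (isOpen_discrete _)
  filter_upwards [hV] with a' ha'
  have hagree := gZ_agree ha'
  have hlt : dZ (gZ a) (gZ a') < (2:ℝ) ^ (-((gZ a).1 N : ℝ)) :=
    dZ_lt_of_agree fun j hj => (hagree j hj).symm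
  show dist (gZ a') (gZ a) < ε
  calc dist (gZ a') (gZ a) = dZ (gZ a) (gZ a') := dZ_comm _ _
    _ < (2:ℝ) ^ (-((gZ a).1 N : ℝ)) := hlt
    _ < ε := hball

noncomputable def homeoZ : Zsp ≃ₜ (ℕ → ℕ) where
  toFun := fZ
  invFun := gZ
  left_inv := gZ_fZ
  right_inv := fZ_gZ
  continuous_toFun := continuous_fZ
  continuous_invFun := continuous_gZ

/-! ### non-discreteness -/

def lin (c : ℚ) (hc : 0 ≤ c) : Zsp :=
  ⟨fun n => c + n, fun n => by positivity,
    fun x y h => by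
      have hxy : (x:ℚ) < y := by exact_mod_cast h
      show c + (x:ℚ) < c + (y:ℚ)
      linarith,
    tendsto_atTop_add_const_left _ c tendsto_natCast_atTop_atTop⟩

lemma dZ_lin (c : ℚ) (hc : 0 ≤ c) :
    dZ (lin c hc) (lin (c + 1/2) (by linarith)) = (2:ℝ) ^ (-(c : ℝ)) := by
  have hval : ∀ n : ℕ, (lin c hc).1 n = c + n := fun n => rfl
  have hne : lin c hc ≠ lin (c + 1/2) (by linarith) := by
    intro h
    have h2 : c + ((0:ℕ):ℚ) = c + 1/2 + ((0:ℕ):ℚ) := congrArg (fun Q : Zsp => Q.1 0) h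
    norm_num at h2
  rw [dZ, if_neg hne]
  have h0 : sInf {n | (lin c hc).1 n ≠ (lin (c + 1/2) (by linarith)).1 n} = 0 := by
    apply Nat.sInf_eq_zero.mpr
    left
    show (lin c hc).1 0 ≠ (lin (c + 1/2) (by linarith)).1 0
    show c + (0:ℕ) ≠ c + 1/2 + (0:ℕ)
    push_cast
    norm_num
  rw [h0]
  show (2:ℝ) ^ (-((min (c + (0:ℕ)) (c + 1/2 + (0:ℕ)) : ℚ) : ℝ)) = _
  have : min (c + ((0:ℕ):ℚ)) (c + 1/2 + ((0:ℕ):ℚ)) = c := by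
    push_cast
    rw [min_eq_left (by linarith)]
    ring
  rw [this]

end ZAux

/-- `(Z, dZ)` is an ultrametric space, homeomorphic to the Baire space `ℕ → ℕ`, and is not a
discrete ultrametric space. -/
theorem Zsp_ultrametric_homeomorph_baire_not_discrete :
    ∃ m : MetricSpace Zsp,
      (∀ Q Q' : Zsp, m.dist Q Q' = dZ Q Q') ∧
      (∀ Q Q' Q'' : Zsp, dZ Q Q'' ≤ max (dZ Q Q') (dZ Q' Q'')) ∧
      Nonempty (@Homeomorph Zsp (ℕ → ℕ) m.toUniformSpace.toTopologicalSpace inferInstance) ∧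
      ¬ (∀ u : ℕ → ℝ, (∀ n, ∃ Q Q' : Zsp, dZ Q Q' = u n) →
          (∀ n, u (n + 1) < u n) → Tendsto u atTop (𝓝 0)) := by
  refine ⟨ZAux.instMSZ, fun Q Q' => rfl, ZAux.dZ_ultra, ⟨ZAux.homeoZ⟩, ?_⟩
  intro hdisc
  set c : ℕ → ℚ := fun n => 1 - 1/(n+1) with hc
  have hc0 : ∀ n, 0 ≤ c n := by
    intro n
    have h1 : (0:ℚ) < (n:ℚ) + 1 := by positivity
    have h2 : 1/((n:ℚ)+1) ≤ 1 := by
      rw [div_le_one h1]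
      linarith
    simp only [hc]
    linarith
  have hc1 : ∀ n, c n ≤ 1 := by
    intro n
    have h1 : (0:ℚ) < (n:ℚ) + 1 := by positivity
    have : 0 ≤ 1/((n:ℚ)+1) := by positivity
    simp only [hc]
    linarith
  have hcmono : ∀ n, c n < c (n+1) := by
    intro n
    simp only [hc]
    have h1 : (0:ℚ) < (n:ℚ) + 1 := by positivity
    have h2 : (n:ℚ) + 1 < (n:ℚ) + 1 + 1 := by linarith
    have := one_div_lt_one_div_of_lt h1 h2
    push_cast
    linarith
  set u : ℕ → ℝ := fun n => (2:ℝ) ^ (-(c n : ℝ)) with hu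
  have hatt : ∀ n, ∃ Q Q' : Zsp, dZ Q Q' = u n := fun n =>
    ⟨ZAux.lin (c n) (hc0 n), ZAux.lin (c n + 1/2) ((hc0 n).trans (le_add_of_nonneg_right (by norm_num))),
      ZAux.dZ_lin (c n) (hc0 n)⟩
  have hdec : ∀ n, u (n + 1) < u n := by
    intro n
    apply Real.rpow_lt_rpow_of_exponent_lt one_lt_two
    rw [neg_lt_neg_iff]
    exact_mod_cast hcmono n
  have htend := hdisc u hatt hdec
  have hlb : ∀ n, (2:ℝ) ^ (-(1:ℝ)) ≤ u n := by
    intro n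
    apply ZAux.two_rpow_le
    rw [neg_le_neg_iff]
    exact_mod_cast hc1 n
  have hev := htend.eventually_lt_const (show (0:ℝ) < (2:ℝ) ^ (-(1:ℝ)) by positivity)
  obtain ⟨n, hn⟩ := hev.exists
  exact absurd (hlb n) (not_le.mpr hn)
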